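/- There is no finite connected pentavalent graph Γ admitting an arc-transitive group G ≤ Aut Γ that contains a cyclic normal subgroup F acting regularly on the vertices of Γ. -/
import Mathlib


/-- The automorphism group of a simple graph acts on its vertices. -/
instance graphAutMulAction {V : Type*} {Γ : SimpleGraph V} : MulAction (Γ ≃g Γ) V where
  smul g v := g v
  one_smul _ := rfl
  mul_smul _ _ _ := rfl

/-- An involution on a finset of odd cardinality has a fixed point. -/
lemma exists_fixed_of_odd_card {α : Type*} [DecidableEq α] (i : α → α)
    (hi : ∀ a, i (i a) = a) :
    ∀ (S : Finset α), (∀ a ∈ S, i a ∈ S) → Odd S.card → ∃ a ∈ S, i a = a := by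
  intro S
  induction S using Finset.strongInduction with
  | _ S ih =>
    intro hclosed hodd
    have hne : S.Nonempty := Finset.card_pos.mp hodd.pos
    obtain ⟨a, ha⟩ := hne
    by_cases hfix : i a = a
    · exact ⟨a, ha, hfix⟩
    · have hia : i a ∈ S := hclosed a ha
      have hiaa : i a ∈ S.erase a := Finset.mem_erase.mpr ⟨hfix, hia⟩
      set S' : Finset α := (S.erase a).erase (i a) with hS'
      have hsub : S' ⊂ S :=
        ssubset_of_subset_of_ssubset (Finset.erase_subset _ _) (Finset.erase_ssubset ha)
      have hcard : S'.card = S.card - 2 := by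
        rw [hS', Finset.card_erase_of_mem hiaa, Finset.card_erase_of_mem ha]; omega
      have h2le : 2 ≤ S.card := Finset.one_lt_card.mpr ⟨a, ha, i a, hia, fun h => hfix h.symm⟩
      have hodd' : Odd S'.card := by
        rw [hcard]
        exact Nat.Odd.sub_even h2le hodd (by norm_num)
      have hclosed' : ∀ b ∈ S', i b ∈ S' := by
        intro b hb
        rw [hS', Finset.mem_erase, Finset.mem_erase] at hb ⊢
        obtain ⟨hb1, hb2, hb3⟩ := hb
        refine ⟨fun h => hb2 ?_, fun h => hb1 ?_, hclosed b hb3⟩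
        · rw [← hi a, ← h, hi]
        · rw [← hi b, h]
      obtain ⟨c, hc, hcfix⟩ := ih S' hsub hclosed' hodd'
      exact ⟨c, hsub.subset hc, hcfix⟩

/-- No connected pentavalent graph admits an arc-transitive group of automorphisms
containing a cyclic normal subgroup that is regular on the vertices. -/
theorem no_cyclic_regular_normal_subgroup
    {V : Type*} [Fintype V] (Γ : SimpleGraph V) [DecidableRel Γ.Adj]
    (hconn : Γ.Connected) (hdeg : ∀ v : V, Γ.degree v = 5)
    (G : Subgroup (Γ ≃g Γ))
    (harc : ∀ ⦃u v u' v' : V⦄, Γ.Adj u v → Γ.Adj u' v' →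
      ∃ g ∈ G, g • u = u' ∧ g • v = v')
    (F : Subgroup G) (hnorm : F.Normal) (hcyc : IsCyclic F)
    (htrans : ∀ u v : V, ∃ f : F, f • u = v)
    (hfree : ∀ (f : F) (v : V), f • v = v → f = 1) :
    False := by
  classical
  obtain ⟨v⟩ := hconn.nonempty
  -- the action of F on V is injective on orbits
  have hinj : Function.Injective (fun f : F => f • v) := by
    intro a b hab
    have h1 : (b⁻¹ * a) • v = v := by
      simp only at hab
      rw [mul_smul, hab, inv_smul_eq_iff]
    have := hfree _ _ h1
    rwa [inv_mul_eq_one, eq_comm] at this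
  haveI : Fintype F := Fintype.ofInjective _ hinj
  -- the "connection set"
  set S : Finset F := Finset.univ.filter (fun f => Γ.Adj (f • v) v) with hSdef
  have hmemS : ∀ f : F, f ∈ S ↔ Γ.Adj (f • v) v := by
    intro f; simp [hSdef]
  -- for f : F, the action on V unfolds to application of the graph iso
  have hact : ∀ (f : F) (u : V), f • u = (((f : G) : Γ ≃g Γ)) u := fun _ _ => rfl
  -- S has cardinality 5
  have hcardS : S.card = 5 := by
    rw [← hdeg v, SimpleGraph.degree]
    apply Finset.card_bij (fun f _ => f • v)
    · intro f hf
      rw [SimpleGraph.mem_neighborFinset]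
      exact ((hmemS f).mp hf).symm
    · intro a ha b hb hab
      exact hinj hab
    · intro u hu
      rw [SimpleGraph.mem_neighborFinset] at hu
      obtain ⟨f, hf⟩ := htrans v u
      exact ⟨f, (hmemS f).mpr (by rw [hf]; exact hu.symm), hf⟩
  -- S is closed under inverses
  have hSinv : ∀ f ∈ S, f⁻¹ ∈ S := by
    intro f hf
    rw [hmemS] at hf ⊢
    have : Γ.Adj (f⁻¹ • (f • v)) (f⁻¹ • v) := by
      rw [hact, hact]
      exact (((f⁻¹ : F) : G) : Γ ≃g Γ).map_adj_iff.mpr hf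
    rw [inv_smul_smul] at this
    exact this.symm
  -- there is an involution in S
  obtain ⟨s, hsS, hs⟩ := exists_fixed_of_odd_card (fun f : F => f⁻¹) (fun a => inv_inv a) S
    hSinv (by rw [hcardS]; exact ⟨2, rfl⟩)
  have hs2 : s ^ 2 = 1 := by
    rw [pow_two]; nth_rewrite 1 [← hs]; exact inv_mul_cancel s
  -- every element of S is conjugate to s, hence an involution
  have hall : ∀ t ∈ S, t ^ 2 = 1 := by
    intro t htS
    rw [hmemS] at htS hsS
    obtain ⟨g, hgG, hgv, hgt⟩ := harc htS.symm hsS.symm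
    set g' : G := ⟨g, hgG⟩ with hg'
    have hg'v : g' • v = v := hgv
    have hq : g' * (t : G) * g'⁻¹ ∈ F := hnorm.conj_mem (t : G) t.2 g'
    have hqv : (⟨g' * (t : G) * g'⁻¹, hq⟩ : F) • v = s • v := by
      show (g' * (t : G) * g'⁻¹) • v = s • v
      have hginv : g'⁻¹ • v = v := inv_smul_eq_iff.mpr hg'v.symm
      rw [mul_smul, mul_smul, hginv]
      have : (t : G) • v = t • v := rfl
      rw [this]
      exact hgt
    have heq : (⟨g' * (t : G) * g'⁻¹, hq⟩ : F) = s := hinj hqv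
    have : g' * (t : G) * g'⁻¹ = (s : G) := congrArg Subtype.val heq
    have ht2 : (t : G) ^ 2 = 1 := by
      have hts : (t : G) = g'⁻¹ * (s : G) * g' := by
        rw [← this]; group
      have hs2' : (s : G) ^ 2 = 1 := by
        have := congrArg (Subtype.val : F → G) hs2
        push_cast at this
        exact_mod_cast this
      rw [hts, pow_two]
      calc (g'⁻¹ * (s : G) * g') * (g'⁻¹ * (s : G) * g')
          = g'⁻¹ * ((s : G) * (s : G)) * g' := by group
      _ = 1 := by rw [← pow_two, hs2', mul_one, inv_mul_cancel]
    have : ((t ^ 2 : F) : G) = ((1 : F) : G) := by push_cast; exact_mod_cast ht2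
    exact Subtype.val_injective this
  -- but a cyclic group has at most 2 solutions to x² = 1
  have hle : (Finset.univ.filter (fun a : F => a ^ 2 = 1)).card ≤ 2 :=
    IsCyclic.card_pow_eq_one_le (by norm_num)
  have hsub : S ⊆ Finset.univ.filter (fun a : F => a ^ 2 = 1) := by
    intro t ht
    exact Finset.mem_filter.mpr ⟨Finset.mem_univ t, hall t ht⟩
  have := Finset.card_le_card hsub
  omega
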